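/- For every x ∈ ℝ, every real orthogonal 3×3 matrix O (i.e. Oᵀ·O = I₃), viewed as a complex matrix, and every 3×3 complex matrix ρ, one has Λ_x(O ρ Oᵀ) = O · Λ_x(ρ) · Oᵀ; i.e., the interpolated channel Λ_x is covariant under the orthogonal group O(3). -/
import Mathlib


open Matrix

/-- The interpolated Landau–Streater/Werner–Holevo channel
`Λ_x(ρ) = (1−x)·ρ + (x/2)·(Tr(ρ)·I₃ − ρᵀ)`. -/
noncomputable def Lam (x : ℝ) (ρ : Matrix (Fin 3) (Fin 3) ℂ) : Matrix (Fin 3) (Fin 3) ℂ :=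
  ((1 : ℂ) - (x : ℂ)) • ρ + ((x : ℂ) / 2) • (ρ.trace • (1 : Matrix (Fin 3) (Fin 3) ℂ) - ρᵀ)

/-- The channel `Λ_x` is covariant under the orthogonal group `O(3)`:
for a real orthogonal matrix `O` (viewed as a complex matrix),
`Λ_x(O ρ Oᵀ) = O Λ_x(ρ) Oᵀ`. -/
theorem lam_orthogonal_covariant (x : ℝ) (O : Matrix (Fin 3) (Fin 3) ℝ)
    (hO : Oᵀ * O = 1) (ρ : Matrix (Fin 3) (Fin 3) ℂ) :
    Lam x (O.map Complex.ofReal * ρ * (O.map Complex.ofReal)ᵀ) =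
      O.map Complex.ofReal * Lam x ρ * (O.map Complex.ofReal)ᵀ := by
  set U : Matrix (Fin 3) (Fin 3) ℂ := O.map Complex.ofReal with hU
  have hUt : Uᵀ * U = 1 := by
    have h1 : Uᵀ * U = (Oᵀ * O).map Complex.ofReal := by
      ext i j
      simp [Matrix.mul_apply, hU, Matrix.map_apply]
    rw [h1, hO, Matrix.map_one Complex.ofReal Complex.ofReal_zero Complex.ofReal_one]
  have hUUt : U * Uᵀ = 1 := mul_eq_one_comm.mp hUt
  have htr : (U * ρ * Uᵀ).trace = ρ.trace := by
    rw [Matrix.trace_mul_cycle, Matrix.mul_assoc, ← Matrix.mul_assoc, hUt, Matrix.one_mul]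
  have htp : (U * ρ * Uᵀ)ᵀ = U * ρᵀ * Uᵀ := by
    simp [Matrix.transpose_mul, Matrix.mul_assoc]
  simp only [Lam, htr, htp]
  rw [Matrix.mul_add, Matrix.add_mul]
  congr 1
  · rw [Matrix.mul_smul, Matrix.smul_mul]
  · simp only [Matrix.mul_smul, Matrix.smul_mul, Matrix.mul_sub, Matrix.sub_mul,
      Matrix.mul_one, Matrix.one_mul, hUUt]
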